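/- Let G be a finite group and g ≥ 1. The number of tuples (R₁,...,R_g) ∈ G^g satisfying R₁²···R_g² = e equals |G|^{g-1} · Σ_{π ∈ Irr(G)} ν₂(π)^g · (dim π)^{2-g}. -/

import Mathlib

open CategoryTheory Module LinearMap

noncomputable section

namespace FS

set_option linter.unusedSectionVars false
set_option maxHeartbeats 800000


set_option linter.unusedSectionVars false

variable {G : Type} [Group G] [Fintype G] [DecidableEq G]

lemma hom_apply_comm {X Y : FDRep ℂ G} (f : X ⟶ Y) (g : G) (x : X) :
    f.hom (X.ρ g x) = Y.ρ g (f.hom x) := by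
  have h := f.comm g
  have := ConcreteCategory.congr_hom h x
  exact this

/-- A subrepresentation on an invariant subspace. -/
def subRep (W : FDRep ℂ G) (p : Submodule ℂ W) (hp : ∀ g : G, ∀ x ∈ p, W.ρ g x ∈ p) :
    Representation ℂ G p where
  toFun g := (W.ρ g).restrict (hp g)
  map_one' := by ext x; simp
  map_mul' g h := by ext x; simp

@[simp] lemma subRep_coe (W : FDRep ℂ G) (p : Submodule ℂ W)
    (hp : ∀ g : G, ∀ x ∈ p, W.ρ g x ∈ p) (g : G) (x : p) :
    ((subRep W p hp g x : p) : W) = W.ρ g x := rfl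

/-- A nontrivial `FDRep` with no nontrivial invariant subspaces is simple. -/
lemma simple_of_invariant (X : FDRep ℂ G) (hnt : Nontrivial X)
    (h : ∀ p : Submodule ℂ X, (∀ g : G, ∀ x ∈ p, X.ρ g x ∈ p) → p = ⊥ ∨ p = ⊤) :
    Simple X := by
  constructor
  intro Y f hmono
  constructor
  · intro hiso hf0
    have h1 : inv f ≫ f = inv f ≫ 0 := congrArg (CategoryStruct.comp (inv f)) hf0
    rw [IsIso.inv_hom_id] at h1
    simp only [Limits.comp_zero] at h1
    obtain ⟨x, y, hxy⟩ := hnt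
    apply hxy
    have hx := ConcreteCategory.congr_hom (congrArg Action.Hom.hom h1) x
    have hy := ConcreteCategory.congr_hom (congrArg Action.Hom.hom h1) y
    simp only [Action.id_hom, Action.zero_hom] at hx hy
    simpa using hx.trans hy.symm
  · intro hf0
    -- f.hom is injective
    have hker : ∀ g : G, ∀ x ∈ LinearMap.ker (f.hom.hom.hom : Y →ₗ[ℂ] X), Y.ρ g x ∈ LinearMap.ker (f.hom.hom.hom : Y →ₗ[ℂ] X) := by
      intro g x hx
      rw [LinearMap.mem_ker] at hx ⊢
      exact (hom_apply_comm f g x).trans (by change (X.ρ g) (f.hom.hom.hom x) = 0; rw [hx]; simp)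
    -- the inclusion of the kernel subrepresentation
    let K : FDRep ℂ G := FDRep.of (subRep Y _ hker)
    let ι : K ⟶ Y := ⟨InducedCategory.homMk (ModuleCat.ofHom (LinearMap.ker (f.hom.hom.hom : Y →ₗ[ℂ] X)).subtype), fun g => rfl⟩
    have hιf : ι ≫ f = (0 : K ⟶ Y) ≫ f := by
      simp only [Limits.zero_comp]
      apply Action.Hom.ext
      apply FGModuleCat.hom_ext; apply LinearMap.ext
      intro x
      exact x.2
    have hι : ι = 0 := (cancel_mono f).mp hιf
    have hinj : Function.Injective (f.hom.hom.hom : Y →ₗ[ℂ] X) := by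
      rw [← LinearMap.ker_eq_bot]
      rw [Submodule.eq_bot_iff]
      intro x hx
      have := ConcreteCategory.congr_hom (congrArg Action.Hom.hom hι) (show K from ⟨x, hx⟩)
      exact this
    -- the range is invariant, hence everything, so f.hom is surjective
    have hran : ∀ g : G, ∀ x ∈ LinearMap.range (f.hom.hom.hom : Y →ₗ[ℂ] X),
        X.ρ g x ∈ LinearMap.range (f.hom.hom.hom : Y →ₗ[ℂ] X) := by
      rintro g x ⟨y, rfl⟩
      exact ⟨Y.ρ g y, hom_apply_comm f g y⟩
    have hsurj : Function.Surjective (f.hom.hom.hom : Y →ₗ[ℂ] X) := by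
      rcases h _ hran with hb | ht
      · exact absurd (Action.Hom.ext (FGModuleCat.hom_ext (LinearMap.range_eq_bot.mp hb))) hf0
      · rw [← LinearMap.range_eq_top]; exact ht
    -- construct the inverse
    let e : Y ≃ₗ[ℂ] X := LinearEquiv.ofBijective (f.hom.hom.hom : Y →ₗ[ℂ] X) ⟨hinj, hsurj⟩
    refine ⟨⟨⟨InducedCategory.homMk (ModuleCat.ofHom (e.symm : X →ₗ[ℂ] Y)), ?_⟩, ?_, ?_⟩⟩
    · intro g
      ext x
      apply hinj
      show f.hom (e.symm (X.ρ g x)) = f.hom (Y.ρ g (e.symm x))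
      rw [hom_apply_comm f g]
      show e (e.symm (X.ρ g x)) = X.ρ g (e (e.symm x))
      simp
    · ext y
      show e.symm (e y) = y
      simp
    · ext x
      show e (e.symm x) = x
      simp




local notation "A" => MonoidAlgebra ℂ G

lemma asmul (W : FDRep ℂ G) (a : A) (x : (Representation.asModule W.ρ)) :
    a • x = (Representation.asAlgebraHom W.ρ) a x := rfl

lemma csmul (W : FDRep ℂ G) (c : ℂ) (x : (Representation.asModule W.ρ)) :
    (algebraMap ℂ A c) • x = c • (show (W : Type) from x) := by
  rw [asmul, AlgHom.commutes]
  simp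
  rfl

lemma gsmul (W : FDRep ℂ G) (g : G) (x : (Representation.asModule W.ρ)) :
    (MonoidAlgebra.of ℂ G g) • x = W.ρ g (show (W : Type) from x) := by
  rw [asmul]
  simp [Representation.asAlgebraHom_single]
  rfl

/-- Convert a `MonoidAlgebra`-submodule into an invariant `ℂ`-subspace. -/
def toInv (W : FDRep ℂ G) (p : Submodule A (Representation.asModule W.ρ)) :
    Submodule ℂ W where
  carrier := {x : (W : Type) | (show (Representation.asModule W.ρ) from x) ∈ p}
  add_mem' hx hy := p.add_mem hx hy
  zero_mem' := p.zero_mem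
  smul_mem' c x hx := by
    have := p.smul_mem (algebraMap ℂ A c) hx
    rwa [csmul W c x] at this
  
@[simp] lemma mem_toInv (W : FDRep ℂ G) (p : Submodule A (Representation.asModule W.ρ))
    (x : (W : Type)) :
    x ∈ toInv W p ↔ (show (Representation.asModule W.ρ) from x) ∈ p := Iff.rfl

lemma toInv_invariant (W : FDRep ℂ G) (p : Submodule A (Representation.asModule W.ρ)) :
    ∀ g : G, ∀ x ∈ toInv W p, W.ρ g x ∈ toInv W p := by
  intro g x hx
  rw [mem_toInv] at hx ⊢
  have := p.smul_mem (MonoidAlgebra.of ℂ G g) hx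
  rwa [gsmul] at this

/-- Convert an invariant `ℂ`-subspace into a `MonoidAlgebra`-submodule. -/
def fromInv (W : FDRep ℂ G) (q : Submodule ℂ W)
    (hq : ∀ g : G, ∀ x ∈ q, W.ρ g x ∈ q) :
    Submodule A (Representation.asModule W.ρ) where
  carrier := {x : (Representation.asModule W.ρ) | (show (W : Type) from x) ∈ q}
  add_mem' hx hy := q.add_mem hx hy
  zero_mem' := q.zero_mem
  smul_mem' a x hx := by
    show (show (W : Type) from a • x) ∈ q
    rw [asmul, Representation.asAlgebraHom_def, MonoidAlgebra.lift_apply]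
    have hsum : (Finsupp.sum a.coeff fun g r => r • W.ρ g) (show (W : Type) from x)
        = Finsupp.sum a.coeff fun g r => r • W.ρ g (show (W : Type) from x) := by
      classical
      rw [Finsupp.sum, Finsupp.sum]
      exact LinearMap.sum_apply _ _ _
    rw [hsum]
    apply Submodule.sum_mem
    intro i _
    exact q.smul_mem _ (hq i _ hx)

@[simp] lemma mem_fromInv (W : FDRep ℂ G) (q : Submodule ℂ W)
    (hq : ∀ g : G, ∀ x ∈ q, W.ρ g x ∈ q) (x : (Representation.asModule W.ρ)) :
    x ∈ fromInv W q hq ↔ (show (W : Type) from x) ∈ q := Iff.rfl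

/-- Splitting the trace along a complementary pair of invariant subspaces. -/
lemma trace_split {M : Type} [AddCommGroup M] [Module ℂ M] [FiniteDimensional ℂ M]
    {p q : Submodule ℂ M} (h : IsCompl p q) (f : M →ₗ[ℂ] M)
    (hp : ∀ x ∈ p, f x ∈ p) (hq : ∀ x ∈ q, f x ∈ q) :
    trace ℂ M f = trace ℂ p (f.restrict hp) + trace ℂ q (f.restrict hq) := by
  set e := Submodule.prodEquivOfIsCompl p q h
  set P := (f.restrict hp).prodMap (f.restrict hq)
  have key : f = e.conj P := by
    apply LinearMap.ext
    intro x
    have h2 : ∀ z : p × q, f (e z) = e (P z) := by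
      rintro ⟨s, t⟩
      simp only [e, Submodule.coe_prodEquivOfIsCompl', map_add, P, LinearMap.prodMap_apply]
      rw [LinearMap.restrict_coe_apply, LinearMap.restrict_coe_apply]
    have := h2 (e.symm x)
    rw [e.apply_symm_apply] at this
    rw [this]
    rfl
  calc trace ℂ M f = trace ℂ M (e.conj P) := congrArg (trace ℂ M) key
    _ = trace ℂ (↥p × ↥q) P := trace_conj' P e
    _ = _ := trace_prodMap' _ _


end FS
namespace FS
variable {G : Type} [Group G] [Fintype G] [DecidableEq G]
local notation "A" => MonoidAlgebra ℂ G
set_option linter.unusedSectionVars false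
set_option maxHeartbeats 1000000

lemma char_decomp {ι : Type} [Fintype ι] (V : ι → FDRep ℂ G)
    (hcomplete : ∀ W : FDRep ℂ G, Simple W → ∃ i, Nonempty (W ≅ V i))
    (W : FDRep ℂ G) :
    ∃ m : ι → ℕ, ∀ x : G, W.character x = ∑ i, (m i : ℂ) * (V i).character x := by
  classical
  haveI : NeZero ((Fintype.card G : ℂ)) := ⟨by exact_mod_cast Fintype.card_ne_zero⟩
  generalize hn : finrank ℂ W = n
  induction n using Nat.strong_induction_on generalizing W with
  | _ n ih =>
  rcases subsingleton_or_nontrivial W with hW | hW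
  · refine ⟨0, fun x => ?_⟩
    have h0 : W.ρ x = 0 := Subsingleton.elim _ _
    simp [FDRep.character, h0]
  · haveI : Nontrivial (Representation.asModule W.ρ) := hW
    obtain ⟨S, hS⟩ :=
      IsSemisimpleModule.exists_simple_submodule A (Representation.asModule W.ρ)
    obtain ⟨T, hT⟩ := exists_isCompl S
    have hSatom : IsAtom S := isSimpleModule_iff_isAtom.mp hS
    set S' := toInv W S with hS'def
    set T' := toInv W T with hT'def
    have hSinv := toInv_invariant W S
    have hTinv := toInv_invariant W T
    have hcompl : IsCompl S' T' := by
      constructor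
      · rw [disjoint_iff, Submodule.eq_bot_iff]
        intro x hx
        rw [Submodule.mem_inf] at hx
        have : (show Representation.asModule W.ρ from x) ∈ S ⊓ T :=
          Submodule.mem_inf.mpr ⟨(mem_toInv W S x).mp hx.1, (mem_toInv W T x).mp hx.2⟩
        rw [hT.inf_eq_bot] at this
        exact this
      · rw [codisjoint_iff, eq_top_iff]
        intro x _
        have hx : (show Representation.asModule W.ρ from x) ∈ S ⊔ T := by
          rw [hT.sup_eq_top]; trivial
        obtain ⟨s, hs, t, ht', hst⟩ := Submodule.mem_sup.mp hx
        have : x = s + t := hst.symm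
        rw [this]
        exact Submodule.add_mem_sup ((mem_toInv W S s).mpr hs) ((mem_toInv W T t).mpr ht')
    -- the two subrepresentations
    set Ws : FDRep ℂ G := FDRep.of (subRep W S' hSinv) with hWs
    set Wt : FDRep ℂ G := FDRep.of (subRep W T' hTinv) with hWt
    have hchar : ∀ x : G, W.character x = Ws.character x + Wt.character x := by
      intro x
      exact trace_split hcompl (W.ρ x) (hSinv x) (hTinv x)
    -- `Ws` is simple
    have hSnebot : S' ≠ ⊥ := by
      intro hbot
      apply hSatom.1
      rw [Submodule.eq_bot_iff]
      intro x hx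
      have : (show (W : Type) from x) ∈ S' := (mem_toInv W S _).mpr hx
      rw [hbot] at this
      exact (Submodule.mem_bot ℂ).mp this
    haveI hntS : Nontrivial S' := Submodule.nontrivial_iff_ne_bot.mpr hSnebot
    have hsimple : Simple Ws := by
      apply simple_of_invariant _ hntS
      intro q hq
      set qM : Submodule ℂ W := q.map S'.subtype with hqM
      have hqMinv : ∀ g : G, ∀ x ∈ qM, W.ρ g x ∈ qM := by
        rintro g x hx
        obtain ⟨y, hy, rfl⟩ := Submodule.mem_map.mp hx
        exact Submodule.mem_map.mpr ⟨subRep W S' hSinv g y, hq g y hy, rfl⟩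
      set qA : Submodule A (Representation.asModule W.ρ) := fromInv W qM hqMinv with hqA
      have hle : qA ≤ S := by
        intro x hx
        have : (show (W : Type) from x) ∈ qM := (mem_fromInv W qM hqMinv x).mp hx
        have : (show (W : Type) from x) ∈ S' := Submodule.map_subtype_le S' q this
        exact (mem_toInv W S _).mp this
      rcases hSatom.le_iff.mp hle with hbot | htop
      · left
        rw [Submodule.eq_bot_iff]
        intro y hy
        have h1 : ((show S' from y) : (W : Type)) ∈ qM :=
          Submodule.mem_map.mpr ⟨show S' from y, hy, rfl⟩
        have h2 : (show Representation.asModule W.ρ from ((show S' from y) : (W : Type))) ∈ qA :=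
          (mem_fromInv W qM hqMinv _).mpr h1
        rw [hbot] at h2
        have h3 : ((show S' from y) : (W : Type)) = 0 := by have := (Submodule.mem_bot A).mp h2; exact this
        exact Subtype.ext h3
      · right
        rw [eq_top_iff]
        intro y _
        have h1 : (show Representation.asModule W.ρ from ((show S' from y) : (W : Type))) ∈ S :=
          (mem_toInv W S _).mp (show S' from y).2
        rw [← htop] at h1
        have h2 : ((show S' from y) : (W : Type)) ∈ qM := (mem_fromInv W qM hqMinv _).mp h1
        obtain ⟨z, hz, hzy⟩ := Submodule.mem_map.mp h2
        have h3 : z = (show S' from y) := Subtype.ext hzy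
        rw [h3] at hz
        exact hz
    obtain ⟨i0, ⟨iso⟩⟩ := hcomplete Ws hsimple
    -- induction on the complement
    have hfr : finrank ℂ S' + finrank ℂ T' = n := by
      rw [← hn]
      exact Submodule.finrank_add_eq_of_isCompl hcompl
    have hpos : 0 < finrank ℂ S' := finrank_pos
    obtain ⟨m', hm'⟩ := ih (finrank ℂ T') (by omega) Wt rfl
    refine ⟨fun j => m' j + if j = i0 then 1 else 0, fun x => ?_⟩
    rw [hchar x, FDRep.char_iso iso, hm' x]
    push_cast
    rw [Finset.sum_congr rfl (fun j _ => add_mul ((m' j : ℂ)) _ _), Finset.sum_add_distrib]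
    simp [Finset.sum_ite_eq', ite_mul]
    ring

end FS

namespace FS
variable {G : Type} [Group G] [Fintype G] [DecidableEq G]
set_option linter.unusedSectionVars false
set_option maxHeartbeats 1000000

lemma reg_char (x : G) :
    (FDRep.of (Representation.ofMulAction ℂ G G)).character x
      = if x = 1 then (Fintype.card G : ℂ) else 0 := by
  classical
  show (trace ℂ (MonoidAlgebra ℂ G)) (Representation.ofMulAction ℂ G G x) = _
  rw [LinearMap.trace_eq_matrix_trace ℂ (MonoidAlgebra.basis G ℂ), Matrix.trace]
  have hdiag : ∀ g : G, Matrix.diag (LinearMap.toMatrix (MonoidAlgebra.basis G ℂ)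
      (MonoidAlgebra.basis G ℂ) ((Representation.ofMulAction ℂ G G) x)) g
        = if x = 1 then 1 else 0 := by
    intro g
    rw [Matrix.diag, LinearMap.toMatrix_apply]
    simp only [MonoidAlgebra.basis_apply]
    rw [Representation.ofMulAction_single]
    simp [MonoidAlgebra.basis, MonoidAlgebra.coeff_single, Finsupp.single_apply, smul_eq_mul, mul_eq_right]
  rw [Finset.sum_congr rfl (fun g _ => hdiag g)]
  simp [Finset.card_univ]

lemma linHom_mem_iff (X Y : FDRep ℂ G) (f : ((X : Type)) →ₗ[ℂ] ((Y : Type))) :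
    f ∈ (Representation.linHom X.ρ Y.ρ).invariants
      ↔ ∀ g : G, f ∘ₗ X.ρ g = Y.ρ g ∘ₗ f := by
  rw [Representation.mem_invariants]
  constructor
  · intro h g
    apply LinearMap.ext
    intro x
    have hg := DFunLike.congr_fun (h g) (X.ρ g x)
    rw [Representation.linHom_apply] at hg
    simp only [LinearMap.comp_apply] at hg
    rw [← Module.End.mul_apply, ← map_mul, inv_mul_cancel, map_one, Module.End.one_apply] at hg
    simp only [LinearMap.comp_apply]
    exact hg.symm
  · intro h g
    rw [Representation.linHom_apply]
    apply LinearMap.ext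
    intro x
    simp only [LinearMap.comp_apply]
    have hx := DFunLike.congr_fun (h g) (X.ρ g⁻¹ x)
    simp only [LinearMap.comp_apply] at hx
    rw [← hx, ← Module.End.mul_apply, ← map_mul, mul_inv_cancel, map_one, Module.End.one_apply]

/-- The invariants of `linHom` are the `FDRep` homs. -/
def invariantsEquivHom (X Y : FDRep ℂ G) :
    (Representation.linHom X.ρ Y.ρ).invariants ≃ₗ[ℂ] (X ⟶ Y) :=
  Representation.linHom.invariantsEquivFDRepHom X Y

open scoped Classical in
lemma char_inner (V W : FDRep ℂ G) [Simple V] [Simple W] :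
    (Fintype.card G : ℂ)⁻¹ * ∑ g : G, V.character g * W.character g⁻¹
      = if Nonempty (V ≅ W) then 1 else 0 := by
  haveI inst : Invertible ((Fintype.card G : ℂ)) :=
    invertibleOfNonzero (by exact_mod_cast Fintype.card_ne_zero)
  rw [show (Fintype.card G : ℂ)⁻¹ = ⅟ (Fintype.card G : ℂ) from (invOf_eq_inv _).symm,
    ← smul_eq_mul]
  conv_lhs =>
    enter [2, 2, g]
    rw [mul_comm, ← FDRep.char_dual, ← Pi.mul_apply, ← FDRep.char_tensor]
    rw [FDRep.char_iso (FDRep.dualTensorIsoLinHom W.ρ V)]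
  haveI : Invertible ((Nat.card G : ℂ)) := by rw [Nat.card_eq_fintype_card]; exact inst
  rw [smul_eq_mul, invOf_eq_inv, Fintype.card_eq_nat_card]
  rw [FDRep.average_char_eq_finrank_invariants]
  rw [show (FDRep.of (Representation.linHom W.ρ V.ρ)).ρ = Representation.linHom W.ρ V.ρ
    from FDRep.of_ρ' (Representation.linHom W.ρ V.ρ)]
  have h1 : finrank ℂ (Representation.linHom W.ρ V.ρ).invariants = finrank ℂ (W ⟶ V) :=
    (invariantsEquivHom W V).finrank_eq
  have h2 : (finrank ℂ (W ⟶ V) : ℕ) = if Nonempty (W ≅ V) then 1 else 0 :=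
    FDRep.finrank_hom_simple_simple W V
  have h3 := congrArg (fun n : ℕ => (n : ℂ)) (h1.trans h2)
  refine h3.trans ?_
  by_cases hne : Nonempty (V ≅ W)
  · have h4 : Nonempty (W ≅ V) := ⟨hne.some.symm⟩
    simp [h4, hne]
  · have h4 : ¬ Nonempty (W ≅ V) := fun h => hne ⟨h.some.symm⟩
    simp [h4, hne]

lemma simple_nontrivial (X : FDRep ℂ G) [Simple X] : Nontrivial X := by
  by_contra h
  rw [not_nontrivial_iff_subsingleton] at h
  apply id_nonzero X
  apply Action.Hom.ext
  apply FGModuleCat.hom_ext; apply LinearMap.ext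
  intro x
  exact @Subsingleton.elim _ h _ _

lemma delta_expand {ι : Type} [Fintype ι] (V : ι → FDRep ℂ G)
    (hirr : ∀ i, Simple (V i))
    (hdist : ∀ i j, Nonempty (V i ≅ V j) → i = j)
    (hcomplete : ∀ W : FDRep ℂ G, Simple W → ∃ i, Nonempty (W ≅ V i)) (x : G) :
    (if x = 1 then (Fintype.card G : ℂ) else 0)
      = ∑ i, (finrank ℂ (V i) : ℂ) * (V i).character x := by
  classical
  have hc0 : (Fintype.card G : ℂ) ≠ 0 := by exact_mod_cast Fintype.card_ne_zero
  obtain ⟨m, hm⟩ := char_decomp V hcomplete (FDRep.of (Representation.ofMulAction ℂ G G))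
  have hmd : ∀ j, (m j : ℂ) = (finrank ℂ (V j) : ℂ) := by
    intro j
    haveI := hirr j
    have key : (Fintype.card G : ℂ)⁻¹ * ∑ y : G,
        (FDRep.of (Representation.ofMulAction ℂ G G)).character y * (V j).character y⁻¹
          = (m j : ℂ) := by
      have step : ∀ y : G,
          (FDRep.of (Representation.ofMulAction ℂ G G)).character y * (V j).character y⁻¹
            = ∑ i, (m i : ℂ) * ((V i).character y * (V j).character y⁻¹) := by
        intro y
        rw [hm y, Finset.sum_mul]
        exact Finset.sum_congr rfl fun i _ => by ring
      rw [Finset.sum_congr rfl (fun y _ => step y), Finset.sum_comm, Finset.mul_sum]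
      have step2 : ∀ i, (Fintype.card G : ℂ)⁻¹ * ∑ y : G,
          (m i : ℂ) * ((V i).character y * (V j).character y⁻¹)
            = (m i : ℂ) * if Nonempty (V i ≅ V j) then 1 else 0 := by
        intro i
        haveI := hirr i
        rw [← Finset.mul_sum, ← char_inner (V i) (V j)]
        ring
      rw [Finset.sum_congr rfl (fun i _ => step2 i)]
      have step3 : ∀ i, ((m i : ℂ) * if Nonempty (V i ≅ V j) then 1 else 0)
          = if i = j then (m i : ℂ) else 0 := by
        intro i
        by_cases hij : i = j
        · subst hij
          simp [Nonempty.intro (Iso.refl (V i))]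
        · rw [if_neg hij, if_neg (fun hne => hij (hdist i j hne)), mul_zero]
      rw [Finset.sum_congr rfl (fun i _ => step3 i)]
      simp
    have key2 : (Fintype.card G : ℂ)⁻¹ * ∑ y : G,
        (FDRep.of (Representation.ofMulAction ℂ G G)).character y * (V j).character y⁻¹
          = (finrank ℂ (V j) : ℂ) := by
      have : ∀ y : G, (FDRep.of (Representation.ofMulAction ℂ G G)).character y
          * (V j).character y⁻¹
            = if y = 1 then (Fintype.card G : ℂ) * (V j).character y⁻¹ else 0 := by
        intro y
        rw [reg_char]
        split <;> simp
      rw [Finset.sum_congr rfl (fun y _ => this y), Finset.sum_ite_eq' Finset.univ (1 : G)]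
      simp [inv_one, FDRep.char_one, inv_mul_cancel_left₀ hc0]
    rw [← key, key2]
  rw [← reg_char x, hm x]
  exact Finset.sum_congr rfl fun i _ => by rw [hmd i]

lemma sq_scalar (X : FDRep ℂ G) [Simple X] :
    (∑ r : G, X.ρ (r * r))
      = ((finrank ℂ X : ℂ)⁻¹ * ∑ r : G, X.character (r * r)) • (1 : X →ₗ[ℂ] X) := by
  classical
  haveI := simple_nontrivial X
  have hd0 : (finrank ℂ X : ℂ) ≠ 0 := by
    have : 0 < finrank ℂ X := finrank_pos
    exact_mod_cast this.ne'
  set T : X →ₗ[ℂ] X := ∑ r : G, X.ρ (r * r) with hTdef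
  have hcomm : ∀ g : G, X.ρ g * T = T * X.ρ g := by
    intro g
    rw [hTdef, Finset.mul_sum, Finset.sum_mul]
    have : ∀ r : G, X.ρ g * X.ρ (r * r) = X.ρ (g * (r * r)) := fun r => (map_mul X.ρ _ _).symm
    rw [Finset.sum_congr rfl fun r _ => this r]
    have : ∀ s : G, X.ρ (s * s) * X.ρ g = X.ρ (s * s * g) := fun s => (map_mul X.ρ _ _).symm
    rw [Finset.sum_congr rfl fun s _ => this s]
    exact Fintype.sum_equiv (MulAut.conj g).toEquiv _ _
      (fun r => congrArg X.ρ (by simp [MulAut.conj]))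
  let τ : X ⟶ X := ⟨InducedCategory.homMk (ModuleCat.ofHom T), fun g => by ext1; exact (hcomm g).symm⟩
  have h1 : finrank ℂ (X ⟶ X) = 1 := by
    rw [FDRep.finrank_hom_simple_simple X X, if_pos ⟨Iso.refl X⟩]
  have hid : (𝟙 X : X ⟶ X) ≠ 0 := id_nonzero X
  have hspan : Submodule.span ℂ {(𝟙 X : X ⟶ X)} = ⊤ := by
    apply Submodule.eq_top_of_finrank_eq
    rw [finrank_span_singleton hid, h1]
  have hmem : τ ∈ Submodule.span ℂ {(𝟙 X : X ⟶ X)} := by rw [hspan]; trivial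
  obtain ⟨c, hc⟩ := Submodule.mem_span_singleton.mp hmem
  have hThom : T = c • LinearMap.id := by
    exact (congrArg (fun φ : X ⟶ X => φ.hom.hom.hom) hc).symm
  have htr : (LinearMap.trace ℂ X) T = c * (finrank ℂ X : ℂ) := by
    rw [hThom, map_smul, LinearMap.trace_id, smul_eq_mul]
  have htr2 : (LinearMap.trace ℂ X) T = ∑ r : G, X.character (r * r) := by
    rw [hTdef, map_sum]
    rfl
  have hce : c * (finrank ℂ X : ℂ) = ∑ r : G, X.character (r * r) := by
    rw [← htr, htr2]
  have hcval : c = (finrank ℂ X : ℂ)⁻¹ * ∑ r : G, X.character (r * r) := by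
    rw [← hce]
    field_simp
  rw [hThom, hcval]
  rfl

lemma sum_ofFn_prod {M : Type} [Semiring M] (n : ℕ) (f : G → M) :
    ∑ R : Fin n → G, (List.ofFn fun i => f (R i)).prod = (∑ x : G, f x) ^ n := by
  induction n with
  | zero => simp
  | succ n ihn =>
    rw [pow_succ', ← ihn]
    rw [← Equiv.sum_comp (Fin.consEquiv fun _ : Fin (n + 1) => G)
      (fun R => (List.ofFn fun i => f (R i)).prod)]
    rw [Fintype.sum_prod_type, Finset.sum_mul]
    apply Finset.sum_congr rfl
    intro x _
    rw [Finset.mul_sum]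
    apply Finset.sum_congr rfl
    intro R _
    have h1 : (Fin.consEquiv fun _ : Fin (n + 1) => G) (x, R) = Fin.cons x R := rfl
    rw [h1, List.ofFn_succ]
    simp [Fin.cons_zero, Fin.cons_succ]

end FS


set_option maxHeartbeats 1000000 in

/-- **Frobenius–Schur formula** for non-orientable surfaces: for `g ≥ 1`,
`|{(R₁,…,R_g) : R₁²⋯R_g² = 1}| = |G|^(g-1) ∑_{π} ν₂(π)^g (dim π)^(2-g)`. -/
theorem stmt_3 {G : Type} [Group G] [Fintype G] [DecidableEq G]
    {ι : Type} [Fintype ι] (V : ι → FDRep ℂ G)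
    (hirr : ∀ i, CategoryTheory.Simple (V i))
    (hdist : ∀ i j, Nonempty (V i ≅ V j) → i = j)
    (hcomplete : ∀ W : FDRep ℂ G, CategoryTheory.Simple W → ∃ i, Nonempty (W ≅ V i))
    (g : ℕ) (hg : 1 ≤ g) :
    (Fintype.card {R : Fin g → G // (List.ofFn fun i => R i * R i).prod = 1} : ℂ)
      = (Fintype.card G : ℂ) ^ ((g : ℤ) - 1) *
        ∑ i, ((Fintype.card G : ℂ)⁻¹ * ∑ x : G, (V i).character (x * x)) ^ g *
          (Module.finrank ℂ (V i) : ℂ) ^ (2 - (g : ℤ)) := by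
  classical
  have hc0 : (Fintype.card G : ℂ) ≠ 0 := by exact_mod_cast Fintype.card_ne_zero
  have hcount : (Fintype.card {R : Fin g → G // (List.ofFn fun i => R i * R i).prod = 1} : ℂ)
      = ∑ R : Fin g → G, (if (List.ofFn fun i => R i * R i).prod = 1 then (1:ℂ) else 0) := by
    rw [Fintype.card_subtype, Finset.card_filter]
    push_cast
    exact Finset.sum_congr rfl (fun R _ => by split <;> simp)
  rw [hcount]
  have hd := FS.delta_expand V hirr hdist hcomplete
  have step1 : ∀ R : Fin g → G, (if (List.ofFn fun i => R i * R i).prod = 1 then (1:ℂ) else 0)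
      = (Fintype.card G : ℂ)⁻¹ * ∑ i, (Module.finrank ℂ (V i) : ℂ) *
          (V i).character ((List.ofFn fun i => R i * R i).prod) := by
    intro R
    rw [← hd ((List.ofFn fun i => R i * R i).prod)]
    split <;> simp [hc0]
  rw [Finset.sum_congr rfl (fun R _ => step1 R), ← Finset.mul_sum, Finset.sum_comm]
  have step2 : ∀ i : ι, (∑ R : Fin g → G, (Module.finrank ℂ (V i) : ℂ) *
        (V i).character ((List.ofFn fun j => R j * R j).prod))
      = (Module.finrank ℂ (V i) : ℂ) * (((Module.finrank ℂ (V i) : ℂ)⁻¹ *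
          ∑ r : G, (V i).character (r * r)) ^ g * (Module.finrank ℂ (V i) : ℂ)) := by
    intro i
    haveI := hirr i
    rw [← Finset.mul_sum]
    congr 1
    have hχ : ∀ R : Fin g → G, (V i).character ((List.ofFn fun j => R j * R j).prod)
        = LinearMap.trace ℂ (V i) ((List.ofFn fun j => (V i).ρ (R j * R j)).prod) := by
      intro R
      have h0 : (V i).character ((List.ofFn fun j => R j * R j).prod)
          = LinearMap.trace ℂ (V i) ((V i).ρ ((List.ofFn fun j => R j * R j).prod)) := rfl
      rw [h0, map_list_prod, List.map_ofFn]
      rfl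
    rw [Finset.sum_congr rfl (fun R _ => hχ R), ← map_sum,
      FS.sum_ofFn_prod g (fun r => (V i).ρ (r * r)), FS.sq_scalar (V i),
      smul_pow, one_pow, map_smul, LinearMap.trace_one, smul_eq_mul]
  rw [Finset.sum_congr rfl (fun i _ => step2 i), Finset.mul_sum, Finset.mul_sum]
  apply Finset.sum_congr rfl
  intro i _
  haveI := hirr i
  haveI := FS.simple_nontrivial (V i)
  have hdpos : 0 < Module.finrank ℂ (V i) := Module.finrank_pos
  have hd0 : (Module.finrank ℂ (V i) : ℂ) ≠ 0 := by exact_mod_cast hdpos.ne'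
  rw [zpow_sub₀ hc0, zpow_sub₀ hd0, zpow_natCast, zpow_natCast, zpow_one,
    show (2:ℤ) = ((2:ℕ):ℤ) by norm_num, zpow_natCast]
  field_simp
  rw [div_pow, div_pow, div_mul_cancel₀ _ (pow_ne_zero _ hd0)]
  field_simp
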